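/- Let R be a commutative ring, A = R[σ]/(σⁿ−1), and let a ∈ HH^{2r+1}(A;A), b ∈ HH^{2s+1}(A;A) be odd-degree Hochschild cohomology classes identified with elements of Ann(nσ^{n−1}) ⊆ A. Then their cup product in HH^{2(r+s+1)}(A;A) ≅ A/(nσ^{n−1}A) is the class of −((n−1)n/2)·ab·σ^{n−2}. -/
import Mathlib


noncomputable section

open scoped Classical

/-- The group ring `A = R[σ]/(σⁿ−1) = R[ℤ/nℤ]`. -/
abbrev CycA (R : Type) [CommRing R] (n : ℕ) : Type := AddMonoidAlgebra R (ZMod n)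

/-- The generator `σ` of the group ring. -/
def sig (R : Type) [CommRing R] (n : ℕ) : CycA R n := AddMonoidAlgebra.single (1 : ZMod n) 1

/-- The element `n·σ^(n-1)`. -/
def nsig (R : Type) [CommRing R] (n : ℕ) : CycA R n := (n : CycA R n) * (sig R n) ^ (n - 1)

variable (R : Type) [CommRing R] (n : ℕ)

/-- The cup product of (normalized bar) Hochschild cochains of `A = R[ℤ/nℤ]`. -/
def cupCh {m m' : ℕ} (f : (Fin m → Fin n) → CycA R n) (g : (Fin m' → Fin n) → CycA R n) :
    (Fin (m + m') → Fin n) → CycA R n :=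
  fun x => f (fun j => x (Fin.castAdd m' j)) * g (fun j => x (Fin.natAdd m j))

/-- `φ̄*_{2r+1}(a)`: the degree-`2r+1` cochain representing the class of
`a ∈ Ann(nσ^{n-1}) ≅ HH^{2r+1}`:
`φ̄*_{2r+1}(a)(σ^{i_1},…,σ^{i_{2r+1}}) = (−1)^{r+1} a i₁ σ^{Σ i_k − rn − 1}` if
`i_{2k}+i_{2k+1} ≥ n` for `1 ≤ k ≤ r`, and `0` otherwise. -/
def phiOdd (r : ℕ) (a : CycA R n) : (Fin (2 * r + 1) → Fin n) → CycA R n :=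
  fun i =>
    if ∀ k : Fin r, n ≤ (i ⟨2 * k.val + 1, by have := k.isLt; omega⟩).val
        + (i ⟨2 * k.val + 2, by have := k.isLt; omega⟩).val then
      ((-1 : ℤ) ^ (r + 1) * (i ⟨0, by omega⟩).val) •
        (a * (sig R n) ^ ((∑ t, (i t).val) - r * n - 1))
    else 0

/-- `ψ̄*_{2r}`: evaluation of a degree-`2r` cochain back to the 2-periodic model:
`ψ̄*_{2r}(f) = Σ_{0 ≤ i_1,…,i_r ≤ n−1} (−1)^r f(σ^{i_1}, σ, σ^{i_2}, σ, …, σ^{i_r}, σ)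
σ^{r(n−1) − Σ i_k}`. -/
def psiEven (hn : 0 < n) (r : ℕ) (f : (Fin (2 * r) → Fin n) → CycA R n) : CycA R n :=
  ∑ i : Fin r → Fin n,
    ((-1 : ℤ) ^ r) •
      (f (fun t => if h : t.val % 2 = 0 then i ⟨t.val / 2, by have := t.isLt; omega⟩
          else ⟨1 % n, Nat.mod_lt _ hn⟩)
        * (sig R n) ^ (r * (n - 1) - ∑ k, (i k).val))

private lemma sum_alt_aux (x u v r : ℕ) (huv : u + v = n) :
    ∑ t ∈ Finset.range (2*r+1), (if t = 0 then x else if t % 2 = 1 then u else v)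
      = x + r * n := by
  induction r with
  | zero => simp
  | succ r ih =>
    rw [show 2*(r+1)+1 = (2*r+1)+1+1 by ring, Finset.sum_range_succ, Finset.sum_range_succ, ih]
    have e1 : (if (2*r+1) = 0 then x else if (2*r+1) % 2 = 1 then u else v) = u := by
      rw [if_neg (by omega), if_pos (by omega)]
    have e2 : (if ((2*r+1)+1) = 0 then x else if ((2*r+1)+1) % 2 = 1 then u else v) = v := by
      rw [if_neg (by omega), if_neg (by omega)]
    rw [e1, e2, ← huv]; ring

private def argF (hn : 0 < n) {m : ℕ} (i : Fin m → Fin n) (u : ℕ) (hu : u < 2 * m) : Fin n :=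
  if _h : u % 2 = 0 then i ⟨u / 2, by omega⟩ else ⟨1 % n, Nat.mod_lt _ hn⟩

private lemma argF_even (hn : 0 < n) {m : ℕ} (i : Fin m → Fin n) (u : ℕ) (hu : u < 2*m)
    (h2 : u % 2 = 0) : argF n hn i u hu = i ⟨u/2, by omega⟩ := by
  unfold argF; rw [dif_pos h2]

private lemma argF_odd (hn : 0 < n) {m : ℕ} (i : Fin m → Fin n) (u : ℕ) (hu : u < 2*m)
    (h2 : u % 2 = 1) (hn2 : 2 ≤ n) : (argF n hn i u hu).val = 1 := by
  unfold argF; rw [dif_neg (by omega)]; exact Nat.mod_eq_of_lt hn2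

private lemma cons_mk_succ {m : ℕ} {α : Type*} (x : α) (w : Fin m → α) (c : ℕ) (h : c + 1 < m + 1) :
    (Fin.cons x w : Fin (m+1) → α) ⟨c+1, h⟩ = w ⟨c, by omega⟩ := by
  have hc : c < m := by omega
  exact @Fin.cons_succ m (fun _ => α) x w ⟨c, hc⟩

private lemma cons_mk_zero {m : ℕ} {α : Type*} (x : α) (w : Fin m → α) (h : 0 < m + 1) :
    (Fin.cons x w : Fin (m+1) → α) ⟨0, h⟩ = x := by
  have e : (⟨0, h⟩ : Fin (m+1)) = 0 := Fin.ext (by simp)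
  rw [e, Fin.cons_zero]

private lemma phiOdd_eval (r : ℕ) (a : CycA R n)
    (p : Fin (2*r+1) → Fin n) (j0 uval vval : ℕ) (huv : uval + vval = n)
    (h0 : ∀ h : (0:ℕ) < 2*r+1, (p ⟨0, h⟩).val = j0)
    (hodd : ∀ (c : ℕ) (h : 2*c+1 < 2*r+1), (p ⟨2*c+1, h⟩).val = uval)
    (heven : ∀ (c : ℕ) (h : 2*c+2 < 2*r+1), (p ⟨2*c+2, h⟩).val = vval) :
    phiOdd R n r a p = ((-1:ℤ)^(r+1) * (j0:ℤ)) • (a * (sig R n) ^ (j0 - 1)) := by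
  have hsum : (∑ t, (p t).val) = j0 + r * n := by
    have hpt : ∀ t : Fin (2*r+1),
        (p t).val = (if (t:ℕ) = 0 then j0 else if (t:ℕ) % 2 = 1 then uval else vval) := by
      intro t
      have hlt := t.isLt
      by_cases ht0 : (t:ℕ) = 0
      · rw [if_pos ht0, show t = (⟨0, by omega⟩ : Fin (2*r+1)) from Fin.ext ht0, h0]
      · by_cases ht1 : (t:ℕ) % 2 = 1
        · obtain ⟨c, hc⟩ : ∃ c, (t:ℕ) = 2*c+1 := ⟨(t:ℕ)/2, by omega⟩
          rw [if_neg ht0, if_pos ht1,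
            show t = (⟨2*c+1, by omega⟩ : Fin (2*r+1)) from Fin.ext hc, hodd]
        · obtain ⟨c, hc⟩ : ∃ c, (t:ℕ) = 2*c+2 := ⟨(t:ℕ)/2 - 1, by omega⟩
          rw [if_neg ht0, if_neg ht1,
            show t = (⟨2*c+2, by omega⟩ : Fin (2*r+1)) from Fin.ext hc, heven]
    rw [Finset.sum_congr rfl (fun t _ => hpt t),
      Fin.sum_univ_eq_sum_range (fun u => if u = 0 then j0 else if u % 2 = 1 then uval else vval)
        (2*r+1)]
    exact sum_alt_aux n j0 uval vval r huv
  unfold phiOdd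
  split
  · rw [hsum, h0, show j0 + r*n - r*n - 1 = j0 - 1 from by omega]
  · rename_i hcond
    exfalso
    apply hcond
    intro k
    rw [hodd, heven]
    omega

private lemma phiOdd_zero (r : ℕ) (a : CycA R n) (p : Fin (2*r+1) → Fin n) (c : ℕ)
    (hc : 2*c+2 < 2*r+1)
    (h : (p ⟨2*c+1, by omega⟩).val + (p ⟨2*c+2, hc⟩).val < n) :
    phiOdd R n r a p = 0 := by
  unfold phiOdd
  split
  · rename_i hall
    exfalso
    have h2 : n ≤ (p ⟨2*c+1, by omega⟩).val + (p ⟨2*c+2, hc⟩).val := hall ⟨c, by omega⟩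
    omega
  · rfl

private lemma summand_main (hn : 0 < n) (hn2 : 2 ≤ n)
    (r s : ℕ) (a b : CycA R n) (j : Fin n) (w : Fin (r+s) → Fin n) :
    ((-1:ℤ)^(r+s+1)) •
      (phiOdd R n r a
          (fun t : Fin (2*r+1) => argF n hn (Fin.cons j w) t.val (by have := t.isLt; omega))
        * phiOdd R n s b
          (fun t : Fin (2*s+1) => argF n hn (Fin.cons j w) (2*r+1+t.val) (by have := t.isLt; omega))
        * (sig R n) ^ ((r+s+1)*(n-1) - ∑ k, ((Fin.cons j w : Fin (r+s+1) → Fin n) k).val))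
      = if w = (fun _ => (⟨n-1, by omega⟩ : Fin n)) then
          (-((j:ℕ):ℤ)) • (a * b * (sig R n)^(n-2)) else 0 := by
  by_cases hw : w = (fun _ => (⟨n-1, by omega⟩ : Fin n))
  · rw [if_pos hw]
    subst hw
    set wf : Fin (r+s) → Fin n := (fun _ => (⟨n-1, by omega⟩ : Fin n)) with hwf
    set i0 : Fin (r+s+1) → Fin n := (Fin.cons j wf : Fin (r+s+1) → Fin n) with hi0
    have hi0z : ∀ h : 0 < r+s+1, (i0 ⟨0, h⟩).val = (j:ℕ) := by
      intro h; rw [hi0, cons_mk_zero]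
    have hi0s : ∀ (c : ℕ) (h : c+1 < r+s+1), (i0 ⟨c+1, h⟩).val = n-1 := by
      intro c h; rw [hi0, cons_mk_succ]
    have hP := phiOdd_eval R n r a
      (fun t : Fin (2*r+1) => argF n hn i0 t.val (by have := t.isLt; omega))
      (j:ℕ) 1 (n-1) (by omega)
      (by intro h
          show (argF n hn i0 0 (by omega)).val = (j:ℕ)
          rw [argF_even n hn i0 0 (by omega) (by omega)]
          simp only [Nat.zero_div]
          exact hi0z _)
      (by intro c h
          show (argF n hn i0 (2*c+1) (by omega)).val = 1
          exact argF_odd n hn i0 (2*c+1) (by omega) (by omega) hn2)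
      (by intro c h
          show (argF n hn i0 (2*c+2) (by omega)).val = n-1
          rw [argF_even n hn i0 (2*c+2) (by omega) (by omega)]
          simp only [show (2*c+2)/2 = c+1 from by omega]
          exact hi0s c (by omega))
    have hQ := phiOdd_eval R n s b
      (fun t : Fin (2*s+1) => argF n hn i0 (2*r+1+t.val) (by have := t.isLt; omega))
      1 (n-1) 1 (by omega)
      (by intro h
          show (argF n hn i0 (2*r+1+0) (by omega)).val = 1
          exact argF_odd n hn i0 (2*r+1+0) (by omega) (by omega) hn2)
      (by intro c h
          show (argF n hn i0 (2*r+1+(2*c+1)) (by omega)).val = n-1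
          rw [argF_even n hn i0 (2*r+1+(2*c+1)) (by omega) (by omega)]
          simp only [show (2*r+1+(2*c+1))/2 = (r+c)+1 from by omega]
          exact hi0s (r+c) (by omega))
      (by intro c h
          show (argF n hn i0 (2*r+1+(2*c+2)) (by omega)).val = 1
          exact argF_odd n hn i0 (2*r+1+(2*c+2)) (by omega) (by omega) hn2)
    rw [hP, hQ]
    have hE : (r+s+1)*(n-1) - (∑ k, (i0 k).val) = (n-1) - (j:ℕ) := by
      have hs1 : (∑ k, (i0 k).val) = (j:ℕ) + (r+s)*(n-1) := by
        rw [hi0, Fin.sum_univ_succ]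
        simp [hwf, Finset.sum_const, Finset.card_univ, Fintype.card_fin, smul_eq_mul,
          Fin.cons_zero, Fin.cons_succ, mul_comm]
      rw [hs1, show (r+s+1)*(n-1) = (n-1) + (r+s)*(n-1) from by ring]
      omega
    rw [hE]
    by_cases hj : (j:ℕ) = 0
    · simp [hj]
    · have h1 : 1 ≤ (j:ℕ) := by omega
      have h2 : (j:ℕ) < n := j.isLt
      rw [show (1:ℕ)-1 = 0 from rfl, pow_zero, mul_one]
      simp only [smul_mul_assoc, mul_smul_comm, smul_smul]
      have hpow : sig R n ^ ((j:ℕ)-1) * sig R n ^ (n-1-(j:ℕ)) = sig R n ^ (n-2) := by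
        rw [← pow_add, show ((j:ℕ)-1)+(n-1-(j:ℕ)) = n-2 from by omega]
      have hbase : a * sig R n ^ ((j:ℕ)-1) * b * sig R n ^ (n-1-(j:ℕ))
          = a * b * sig R n ^ (n-2) := by
        rw [← hpow]; ring
      rw [hbase]
      congr 1
      have hsign : ((-1:ℤ)^(r+s+1)) * ((-1:ℤ)^(r+1)) * ((-1:ℤ)^(s+1)) = -1 := by
        rw [← pow_add, ← pow_add]
        exact Odd.neg_one_pow ⟨r+s+1, by ring⟩
      push_cast
      linear_combination ((j:ℕ):ℤ) * hsign
  · rw [if_neg hw]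
    have hex : ∃ k : Fin (r+s), ((w k):ℕ) ≠ n-1 := by
      by_contra hco
      push_neg at hco
      exact hw (funext fun k => Fin.ext (hco k))
    obtain ⟨k, hk⟩ := hex
    have hkl := k.isLt
    have hkv : ((w k):ℕ) < n-1 := by have := (w k).isLt; omega
    by_cases hkr : (k:ℕ) < r
    · have hv1 : (argF n hn (Fin.cons j w : Fin (r+s+1) → Fin n) (2*(k:ℕ)+1)
          (by omega)).val = 1 :=
        argF_odd n hn _ _ _ (by omega) hn2
      have hv2 : argF n hn (Fin.cons j w : Fin (r+s+1) → Fin n) (2*(k:ℕ)+2) (by omega)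
          = w k := by
        rw [argF_even n hn (Fin.cons j w : Fin (r+s+1) → Fin n) (2*(k:ℕ)+2) (by omega) (by omega)]
        simp only [show (2*(k:ℕ)+2)/2 = (k:ℕ)+1 from by omega]
        rw [cons_mk_succ]
      have hz := phiOdd_zero R n r a
        (fun t : Fin (2*r+1) => argF n hn (Fin.cons j w) t.val (by have := t.isLt; omega))
        (k:ℕ) (by omega)
        (by show (argF n hn (Fin.cons j w : Fin (r+s+1) → Fin n) (2*(k:ℕ)+1) (by omega)).val
              + (argF n hn (Fin.cons j w : Fin (r+s+1) → Fin n) (2*(k:ℕ)+2) (by omega)).val < n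
            rw [hv1, hv2]
            omega)
      rw [hz, zero_mul, zero_mul, smul_zero]
    · have hcs : (k:ℕ) - r < s := by omega
      have hv1 : argF n hn (Fin.cons j w : Fin (r+s+1) → Fin n)
          (2*r+1+(2*((k:ℕ)-r)+1)) (by omega) = w k := by
        rw [argF_even n hn (Fin.cons j w : Fin (r+s+1) → Fin n) (2*r+1+(2*((k:ℕ)-r)+1))
          (by omega) (by omega)]
        simp only [show (2*r+1+(2*((k:ℕ)-r)+1))/2 = (r+((k:ℕ)-r))+1 from by omega]
        rw [cons_mk_succ]
        exact congrArg w (Fin.ext (show r+((k:ℕ)-r) = (k:ℕ) from by omega))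
      have hv2 : (argF n hn (Fin.cons j w : Fin (r+s+1) → Fin n)
          (2*r+1+(2*((k:ℕ)-r)+2)) (by omega)).val = 1 :=
        argF_odd n hn _ _ _ (by omega) hn2
      have hz := phiOdd_zero R n s b
        (fun t : Fin (2*s+1) => argF n hn (Fin.cons j w) (2*r+1+t.val) (by have := t.isLt; omega))
        ((k:ℕ)-r) (by omega)
        (by show (argF n hn (Fin.cons j w : Fin (r+s+1) → Fin n) (2*r+1+(2*((k:ℕ)-r)+1))
                (by omega)).val
              + (argF n hn (Fin.cons j w : Fin (r+s+1) → Fin n) (2*r+1+(2*((k:ℕ)-r)+2))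
                (by omega)).val < n
            rw [hv1, hv2]
            omega)
      rw [hz, mul_zero, zero_mul, smul_zero]

/-
STATEMENT 8: Let R be a commutative ring, A = R[σ]/(σⁿ−1), and let
a ∈ HH^{2r+1}(A;A), b ∈ HH^{2s+1}(A;A) be odd-degree Hochschild cohomology classes
identified with elements of Ann(nσ^{n−1}) ⊆ A.  Then their cup product in
HH^{2(r+s+1)}(A;A) ≅ A/(nσ^{n−1}A) is the class of −((n−1)n/2)·a·b·σ^{n−2}
(where (n−1)n/2 = choose n 2).
-/
theorem cup_product_odd_odd
    (hn : 0 < n) (r s : ℕ) (a b : CycA R n)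
    (ha : nsig R n * a = 0) (hb : nsig R n * b = 0) :
    (Submodule.Quotient.mk
        (psiEven R n hn (r + s + 1)
          (fun x => cupCh R n (phiOdd R n r a) (phiOdd R n s b)
            (fun t => x (Fin.cast (by ring) t))))
      : CycA R n ⧸ LinearMap.range (LinearMap.mulLeft R (nsig R n)))
    = Submodule.Quotient.mk
        (-((n.choose 2 : ℤ) • (a * b * (sig R n) ^ (n - 2)))) := by
  refine congrArg _ ?_
  by_cases hn2 : 2 ≤ n
  · show (∑ i : Fin (r+s+1) → Fin n, ((-1:ℤ)^(r+s+1)) •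
        (phiOdd R n r a
            (fun t : Fin (2*r+1) => argF n hn i t.val (by have := t.isLt; omega))
          * phiOdd R n s b
            (fun t : Fin (2*s+1) => argF n hn i (2*r+1+t.val) (by have := t.isLt; omega))
          * (sig R n) ^ ((r+s+1)*(n-1) - ∑ k, (i k).val)))
      = -((n.choose 2 : ℤ) • (a * b * (sig R n) ^ (n - 2)))
    rw [← Equiv.sum_comp (Fin.consEquiv (fun _ : Fin (r+s+1) => Fin n)), Fintype.sum_prod_type]
    calc (∑ j : Fin n, ∑ w : Fin (r+s) → Fin n, ((-1:ℤ)^(r+s+1)) •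
        (phiOdd R n r a
            (fun t : Fin (2*r+1) => argF n hn (Fin.cons j w) t.val (by have := t.isLt; omega))
          * phiOdd R n s b
            (fun t : Fin (2*s+1) =>
              argF n hn (Fin.cons j w) (2*r+1+t.val) (by have := t.isLt; omega))
          * (sig R n) ^ ((r+s+1)*(n-1)
              - ∑ k, ((Fin.cons j w : Fin (r+s+1) → Fin n) k).val)))
        = ∑ j : Fin n, ∑ w : Fin (r+s) → Fin n,
            (if w = (fun _ => (⟨n-1, by omega⟩ : Fin n)) then
              (-((j:ℕ):ℤ)) • (a * b * (sig R n)^(n-2)) else 0) := by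
          refine Finset.sum_congr rfl fun j _ => Finset.sum_congr rfl fun w _ => ?_
          exact summand_main R n hn hn2 r s a b j w
      _ = ∑ j : Fin n, (-((j:ℕ):ℤ)) • (a * b * (sig R n)^(n-2)) := by
          refine Finset.sum_congr rfl fun j _ => ?_
          simp only [Finset.sum_ite_eq', Finset.mem_univ, if_true]
      _ = -((n.choose 2 : ℤ) • (a * b * (sig R n) ^ (n - 2))) := by
          rw [← Finset.sum_smul]
          have hs : (∑ j : Fin n, -((j:ℕ) : ℤ)) = -(n.choose 2 : ℤ) := by
            rw [Finset.sum_neg_distrib]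
            congr 1
            rw [← Nat.cast_sum]
            congr 1
            rw [Fin.sum_univ_eq_sum_range (fun u => u) n]
            have h1 := Finset.sum_range_id_mul_two n
            have h2 := Nat.choose_two_right n
            omega
          rw [hs, neg_smul]
  · have hn1 : n = 1 := by omega
    subst hn1
    have ha0 : a = 0 := by
      have h := ha
      rw [nsig] at h
      simpa using h
    rw [ha0]
    have hz : ∀ p, phiOdd R 1 r (0 : CycA R 1) p = 0 := by
      intro p; unfold phiOdd; split <;> simp
    have hpsi : psiEven R 1 hn (r+s+1)
        (fun x => cupCh R 1 (phiOdd R 1 r (0 : CycA R 1)) (phiOdd R 1 s b)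
          (fun t => x (Fin.cast (by ring) t))) = 0 := by
      unfold psiEven cupCh
      refine Finset.sum_eq_zero fun i _ => ?_
      simp [hz]
    rw [hpsi]
    simp

end
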